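/- Let n ≥ 1, and for i = 1,…,n let p_i ≥ 2 and q_i be integers with gcd(p_i, q_i) = 1. Let G = ⟨x₁,…,x_n, y, z, h | [x_i,h] = 1, x₁⋯x_n·y·z² = 1, zhz⁻¹h = 1, x_i^{p_i}h^{q_i} = 1⟩. Then the torsion subgroup of the abelianization of G has order 2·p₁⋯p_n, and the image of h in the abelianization has order exactly 2. -/

import Mathlib

/-- Relations of the group
`⟨x₁,…,x_n, y, z, h | [x_i,h], x₁⋯x_n·y·z², zhz⁻¹h, x_i^{p_i}h^{q_i}⟩`,
with generators `Sum.inl i = x_i`, `Sum.inr 0 = y`, `Sum.inr 1 = z`, `Sum.inr 2 = h`. -/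
def mobiusRels (n : ℕ) (p : Fin n → ℕ) (q : Fin n → ℤ) :
    Set (FreeGroup (Fin n ⊕ Fin 3)) :=
  (Set.range fun i : Fin n =>
      FreeGroup.of (Sum.inl i) * FreeGroup.of (Sum.inr 2) *
        (FreeGroup.of (Sum.inl i))⁻¹ * (FreeGroup.of (Sum.inr 2))⁻¹) ∪
  { (List.ofFn fun i : Fin n => FreeGroup.of (Sum.inl i)).prod *
      FreeGroup.of (Sum.inr 0) * FreeGroup.of (Sum.inr 1) ^ 2,
    FreeGroup.of (Sum.inr 1) * FreeGroup.of (Sum.inr 2) *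
      (FreeGroup.of (Sum.inr 1))⁻¹ * FreeGroup.of (Sum.inr 2) } ∪
  (Set.range fun i : Fin n =>
      FreeGroup.of (Sum.inl i) ^ (p i) * FreeGroup.of (Sum.inr 2) ^ (q i))

namespace MobiusAux

variable (n : ℕ) (p : Fin n → ℕ) (q : Fin n → ℤ)

abbrev A := Abelianization (PresentedGroup (mobiusRels n p q))

def gen : Fin n ⊕ Fin 3 → A n p q := fun x => Abelianization.of (PresentedGroup.of x)

def Xg (i : Fin n) : A n p q := gen n p q (Sum.inl i)
def Yg : A n p q := gen n p q (Sum.inr 0)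
def Zg : A n p q := gen n p q (Sum.inr 1)
def Hg : A n p q := gen n p q (Sum.inr 2)

def μ : FreeGroup (Fin n ⊕ Fin 3) →* A n p q :=
  (Abelianization.of).comp (PresentedGroup.mk (mobiusRels n p q))

lemma μ_of (x : Fin n ⊕ Fin 3) : μ n p q (FreeGroup.of x) = gen n p q x := rfl

lemma μ_rel {r : FreeGroup (Fin n ⊕ Fin 3)} (hr : r ∈ mobiusRels n p q) :
    μ n p q r = 1 := by
  have h1 : PresentedGroup.mk (mobiusRels n p q) r = 1 :=
    (QuotientGroup.eq_one_iff r).mpr (Subgroup.subset_normalClosure hr)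
  simp [μ, h1]

lemma rel2 : (∏ i, Xg n p q i) * Yg n p q * Zg n p q ^ 2 = 1 := by
  have := μ_rel n p q (r := (List.ofFn fun i : Fin n => FreeGroup.of (Sum.inl i)).prod *
      FreeGroup.of (Sum.inr 0) * FreeGroup.of (Sum.inr 1) ^ 2)
    (Or.inl (Or.inr (Set.mem_insert _ _)))
  simpa [map_mul, map_pow, map_list_prod, List.map_ofFn, Function.comp_def,
    List.prod_ofFn, μ_of, Xg, Yg, Zg] using this

lemma rel3 : Hg n p q ^ 2 = 1 := by
  have := μ_rel n p q (r := FreeGroup.of (Sum.inr 1) * FreeGroup.of (Sum.inr 2) *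
      (FreeGroup.of (Sum.inr 1))⁻¹ * FreeGroup.of (Sum.inr 2))
    (Or.inl (Or.inr (Set.mem_insert_of_mem _ rfl)))
  simp only [map_mul, map_inv, μ_of] at this
  calc Hg n p q ^ 2
      = gen n p q (Sum.inr 1) * gen n p q (Sum.inr 2) * (gen n p q (Sum.inr 1))⁻¹ *
        gen n p q (Sum.inr 2) := by
        rw [sq, mul_comm (gen n p q (Sum.inr 1)) (gen n p q (Sum.inr 2)),
          mul_inv_cancel_right]
        rfl
    _ = 1 := this

lemma rel4 (i : Fin n) : Xg n p q i ^ (p i) * Hg n p q ^ (q i) = 1 := by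
  have := μ_rel n p q (r := FreeGroup.of (Sum.inl i) ^ (p i) *
      FreeGroup.of (Sum.inr 2) ^ (q i)) (Or.inr ⟨i, rfl⟩)
  simpa [map_mul, map_pow, map_zpow, μ_of, Xg, Hg] using this


variable {M : Type*} [CommGroup M]

def mkf (fx : Fin n → M) (fy fz fh : M) : Fin n ⊕ Fin 3 → M :=
  Sum.elim fx ![fy, fz, fh]

def mkHom (fx : Fin n → M) (fy fz fh : M)
    (h2 : (∏ i, fx i) * fy * fz ^ 2 = 1)
    (h3 : fz * fh * fz⁻¹ * fh = 1)
    (h4 : ∀ i, fx i ^ (p i) * fh ^ (q i) = 1) :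
    A n p q →* M :=
  Abelianization.lift (PresentedGroup.toGroup (f := mkf n fx fy fz fh) (by
    rintro r ((⟨i, rfl⟩ | rfl | rfl) | ⟨i, rfl⟩) <;>
      simp only [map_mul, map_inv, map_pow, map_zpow, map_list_prod, List.map_ofFn,
        Function.comp_def, List.prod_ofFn, FreeGroup.lift_apply_of]
    · simp [mkf, mul_comm, mul_inv_cancel_comm]
    · simpa [mkf] using h2
    · simpa [mkf] using h3
    · simpa [mkf] using h4 i))

lemma mkHom_gen (fx : Fin n → M) (fy fz fh : M) (h2 h3 h4) (x : Fin n ⊕ Fin 3) :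
    mkHom n p q fx fy fz fh h2 h3 h4 (gen n p q x) = mkf n fx fy fz fh x := by
  simp [mkHom, gen, Abelianization.lift_apply_of, PresentedGroup.toGroup.of]

lemma mkHom_X (fx : Fin n → M) (fy fz fh : M) (h2 h3 h4) (i : Fin n) :
    mkHom n p q fx fy fz fh h2 h3 h4 (Xg n p q i) = fx i := by
  simp [Xg, mkHom_gen, mkf]

lemma mkHom_Y (fx : Fin n → M) (fy fz fh : M) (h2 h3 h4) :
    mkHom n p q fx fy fz fh h2 h3 h4 (Yg n p q) = fy := by
  simp [Yg, mkHom_gen, mkf]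

lemma mkHom_Z (fx : Fin n → M) (fy fz fh : M) (h2 h3 h4) :
    mkHom n p q fx fy fz fh h2 h3 h4 (Zg n p q) = fz := by
  simp [Zg, mkHom_gen, mkf]

lemma mkHom_H (fx : Fin n → M) (fy fz fh : M) (h2 h3 h4) :
    mkHom n p q fx fy fz fh h2 h3 h4 (Hg n p q) = fh := by
  simp [Hg, mkHom_gen, mkf]


open Multiplicative

/-- degree map: `z ↦ 1`, `y ↦ -2`, rest to 0. -/
def π : A n p q →* Multiplicative ℤ :=
  mkHom n p q (fun _ => 1) (ofAdd (-2)) (ofAdd 1) 1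
    (by
      apply Multiplicative.toAdd.injective
      simp)
    (by simp)
    (by simp)

lemma π_X (i : Fin n) : π n p q (Xg n p q i) = 1 := mkHom_X ..
lemma π_H : π n p q (Hg n p q) = 1 := mkHom_H ..
lemma π_Z : π n p q (Zg n p q) = ofAdd 1 := mkHom_Z ..


/-- the map to `∏ ZMod (p i)` killing `h` and `z`, `x i ↦ e_i`. -/
def ψ : A n p q →* (∀ i, Multiplicative (ZMod (p i))) :=
  mkHom n p q (fun i => Pi.mulSingle i (ofAdd (1 : ZMod (p i))))
    (∏ i, Pi.mulSingle i (ofAdd (1 : ZMod (p i))))⁻¹ 1 1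
    (by simp [mul_comm])
    (by simp)
    (by
      intro i
      have h1 : (ofAdd (1 : ZMod (p i))) ^ (p i) = 1 := by
        rw [← ofAdd_nsmul]
        simp [nsmul_eq_mul, ZMod.natCast_self]
      rw [one_zpow, mul_one, ← Pi.mulSingle_pow, h1, Pi.mulSingle_one])

lemma ψ_X (i : Fin n) : ψ n p q (Xg n p q i) = Pi.mulSingle i (ofAdd (1 : ZMod (p i))) :=
  mkHom_X ..
lemma ψ_H : ψ n p q (Hg n p q) = 1 := mkHom_H ..


/-- the map to `ZMod (2 * ∏ p i)` detecting `h`. -/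
def φ : A n p q →* Multiplicative (ZMod (2 * ∏ i, p i)) :=
  mkHom n p q
    (fun i => ofAdd (-((q i : ZMod (2 * ∏ i, p i)) *
        ((∏ j ∈ Finset.univ.erase i, p j : ℕ) : ZMod (2 * ∏ i, p i)))))
    (ofAdd (∑ i, (q i : ZMod (2 * ∏ i, p i)) *
        ((∏ j ∈ Finset.univ.erase i, p j : ℕ) : ZMod (2 * ∏ i, p i))))
    1 (ofAdd (((∏ i, p i : ℕ) : ZMod (2 * ∏ i, p i))))
    (by
      apply Multiplicative.toAdd.injective
      simp [toAdd_prod, Finset.sum_neg_distrib])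
    (by
      apply Multiplicative.toAdd.injective
      have h0 : ((2 * ∏ i, p i : ℕ) : ZMod (2 * ∏ i, p i)) = 0 := ZMod.natCast_self _
      push_cast at h0
      simp only [toAdd_mul, toAdd_inv, toAdd_one, toAdd_ofAdd]
      push_cast
      linear_combination h0)
    (by
      intro i
      apply Multiplicative.toAdd.injective
      have key : ((p i : ℕ) : ZMod (2 * ∏ i, p i)) *
          ((∏ j ∈ Finset.univ.erase i, p j : ℕ) : ZMod (2 * ∏ i, p i)) =
          ((∏ j, p j : ℕ) : ZMod (2 * ∏ i, p i)) := by
        rw [← Nat.cast_mul, Finset.mul_prod_erase _ _ (Finset.mem_univ i)]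
      simp only [toAdd_mul, toAdd_pow, toAdd_zpow, toAdd_ofAdd, toAdd_one]
      rw [nsmul_eq_mul, zsmul_eq_mul]
      linear_combination (-(q i : ZMod (2 * ∏ i, p i))) * key)

lemma φ_H : φ n p q (Hg n p q) = ofAdd (((∏ i, p i : ℕ) : ZMod (2 * ∏ i, p i))) :=
  mkHom_H ..

lemma prod_pos (hp : ∀ i, 2 ≤ p i) : 0 < ∏ i, p i :=
  Finset.prod_pos fun i _ => lt_of_lt_of_le two_pos (hp i)

lemma Hg_ne_one (hp : ∀ i, 2 ≤ p i) : Hg n p q ≠ 1 := by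
  intro h
  have h2 := φ_H n p q
  rw [h, map_one] at h2
  have : (((∏ i, p i : ℕ) : ZMod (2 * ∏ i, p i))) = 0 := by
    have := h2.symm
    rwa [← ofAdd_zero, Multiplicative.ofAdd.injective.eq_iff] at this
  rw [ZMod.natCast_eq_zero_iff] at this
  have hP := prod_pos n p hp
  have := Nat.le_of_dvd hP this
  omega

lemma orderOf_Hg (hp : ∀ i, 2 ≤ p i) : orderOf (Hg n p q) = 2 :=
  orderOf_eq_prime (rel3 n p q) (Hg_ne_one n p q hp)


lemma prod_zpow {M : Type*} [CommGroup M] (a : M) {ι : Type*} (s : Finset ι) (e : ι → ℤ) :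
    (∏ i ∈ s, a ^ e i) = a ^ (∑ i ∈ s, e i) := by
  classical
  induction s using Finset.induction with
  | empty => simp
  | insert _ _ hx ih => simp [Finset.prod_insert hx, Finset.sum_insert hx, ih, zpow_add]

def K : Subgroup (A n p q) := Subgroup.closure (Set.range (Xg n p q) ∪ {Hg n p q})

lemma X_mem_K (i : Fin n) : Xg n p q i ∈ K n p q :=
  Subgroup.subset_closure (Or.inl ⟨i, rfl⟩)

lemma H_mem_K : Hg n p q ∈ K n p q := Subgroup.subset_closure (Or.inr rfl)

lemma closure_range_gen : Subgroup.closure (Set.range (gen n p q)) = ⊤ := by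
  have hsurj : Function.Surjective
      (Abelianization.of : PresentedGroup (mobiusRels n p q) →* A n p q) := fun a =>
    QuotientGroup.induction_on a fun g => ⟨g, rfl⟩
  have h1 : Set.range (gen n p q) =
      (Abelianization.of : PresentedGroup (mobiusRels n p q) →* A n p q) ''
        Set.range (PresentedGroup.of) := by
    rw [← Set.range_comp]; rfl
  rw [h1, ← MonoidHom.map_closure, PresentedGroup.closure_range_of, ← MonoidHom.range_eq_map,
    MonoidHom.range_eq_top.mpr hsurj]

lemma hXP (i : Fin n) : Xg n p q i ^ (p i) = (Hg n p q ^ (q i))⁻¹ :=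
  eq_inv_of_mul_eq_one_left (rel4 n p q i)

lemma hH2z : Hg n p q ^ (2 : ℤ) = 1 := by
  rw [zpow_two, ← pow_two, rel3]

lemma sup_eq_top : K n p q ⊔ Subgroup.zpowers (Zg n p q) = ⊤ := by
  rw [eq_top_iff, ← closure_range_gen n p q, Subgroup.closure_le]
  rintro _ ⟨x, rfl⟩
  rcases x with i | j
  · exact Subgroup.mem_sup_left (X_mem_K n p q i)
  · fin_cases j
    · -- y
      show gen n p q (Sum.inr 0) ∈ (K n p q ⊔ Subgroup.zpowers (Zg n p q) : Subgroup (A n p q))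
      have h2 := rel2 n p q
      rw [mul_comm (∏ i, Xg n p q i) (Yg n p q), mul_assoc] at h2
      have hy : gen n p q (Sum.inr 0) = ((∏ i, Xg n p q i) * Zg n p q ^ 2)⁻¹ :=
        eq_inv_of_mul_eq_one_left h2
      rw [hy]
      exact inv_mem (mul_mem
        (Subgroup.mem_sup_left (prod_mem fun i _ => X_mem_K n p q i))
        (Subgroup.mem_sup_right (pow_mem (Subgroup.mem_zpowers _) 2)))
    · exact Subgroup.mem_sup_right (Subgroup.mem_zpowers _)
    · show gen n p q (Sum.inr 2) ∈ (K n p q ⊔ Subgroup.zpowers (Zg n p q) : Subgroup (A n p q))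
      exact Subgroup.mem_sup_left (H_mem_K n p q)

lemma torsion_eq (hp : ∀ i, 2 ≤ p i) : CommGroup.torsion (A n p q) = K n p q := by
  apply le_antisymm
  · -- torsion ≤ K
    intro a ha
    have hfin : IsOfFinOrder a := ha
    have : a ∈ K n p q ⊔ Subgroup.zpowers (Zg n p q) := by
      rw [sup_eq_top]; trivial
    rw [Subgroup.mem_sup] at this
    obtain ⟨y, hy, z, hz, rfl⟩ := this
    obtain ⟨m, rfl⟩ := hz
    have hπy : π n p q y = 1 := by
      have hK : K n p q ≤ (π n p q).ker := by
        rw [K, Subgroup.closure_le]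
        rintro _ (⟨i, rfl⟩ | rfl)
        · exact π_X n p q i
        · exact π_H n p q
      exact hK hy
    have hπ : π n p q (y * Zg n p q ^ m) = ofAdd m := by
      rw [map_mul, map_zpow, hπy, π_Z, one_mul, ← ofAdd_zsmul, smul_eq_mul, mul_one]
    have hfinπ : IsOfFinOrder (ofAdd m) := by
      rw [← hπ]; exact (π n p q).isOfFinOrder hfin
    obtain ⟨k, hk0, hk⟩ := isOfFinOrder_iff_pow_eq_one.mp hfinπ
    have hm : m = 0 := by
      rw [← ofAdd_nsmul, ← ofAdd_zero, Multiplicative.ofAdd.injective.eq_iff] at hk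
      have h0 : (k : ℤ) * m = 0 := by rw [← hk]; simp
      have hkne : (k : ℤ) ≠ 0 := Int.natCast_ne_zero.mpr hk0.ne'
      exact (mul_eq_zero.mp h0).resolve_left hkne
    simpa [hm] using hy
  · -- K ≤ torsion
    rw [K, Subgroup.closure_le]
    rintro _ (⟨i, rfl⟩ | rfl)
    · show IsOfFinOrder (Xg n p q i)
      refine isOfFinOrder_iff_pow_eq_one.mpr ⟨p i * 2, by have := hp i; omega, ?_⟩
      rw [pow_mul, hXP, inv_pow, ← zpow_natCast (Hg n p q ^ q i) 2, ← zpow_mul,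
        mul_comm (q i), zpow_mul]
      simp [Nat.cast_ofNat, hH2z, rel3]
    · show IsOfFinOrder (Hg n p q)
      exact isOfFinOrder_iff_pow_eq_one.mpr ⟨2, two_pos, rel3 n p q⟩

lemma mem_K_form {b : A n p q} (hb : b ∈ K n p q) :
    ∃ (m : Fin n → ℤ) (k : ℤ), b = (∏ i, Xg n p q i ^ m i) * Hg n p q ^ k := by
  refine Subgroup.closure_induction ?_ ?_ ?_ ?_ hb
  · rintro x (⟨i, rfl⟩ | rfl)
    · refine ⟨Pi.single i 1, 0, ?_⟩
      rw [Finset.prod_eq_single i (fun j _ hj => by simp [Pi.single_eq_of_ne hj])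
        (fun h => absurd (Finset.mem_univ i) h)]
      simp
    · exact ⟨0, 1, by simp⟩
  · exact ⟨0, 0, by simp⟩
  · rintro a b _ _ ⟨m, k, rfl⟩ ⟨m', k', rfl⟩
    refine ⟨m + m', k + k', ?_⟩
    simp only [Pi.add_apply, zpow_add, Finset.prod_mul_distrib]
    exact (mul_mul_mul_comm _ _ _ _).symm
  · rintro a _ ⟨m, k, rfl⟩
    refine ⟨-m, -k, ?_⟩
    simp only [Pi.neg_apply, zpow_neg, mul_inv, Finset.prod_inv_distrib]


lemma psi_ker_zpowers {x : A n p q} (hx : x ∈ K n p q) (hψ : ψ n p q x = 1) :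
    ∃ t : ℤ, x = Hg n p q ^ t := by
  obtain ⟨m, k, rfl⟩ := mem_K_form n p q hx
  have hψval : ∀ j, ((m j : ZMod (p j))) = 0 := by
    intro j
    have hcomp : ψ n p q ((∏ i, Xg n p q i ^ m i) * Hg n p q ^ k)
        = fun i => ofAdd ((m i : ZMod (p i))) := by
      rw [map_mul, map_zpow, ψ_H, one_zpow, mul_one, map_prod]
      have : ∀ i, ψ n p q (Xg n p q i ^ m i)
          = Pi.mulSingle i (ofAdd ((m i : ZMod (p i)))) := by
        intro i
        rw [map_zpow, ψ_X, ← Pi.mulSingle_zpow, ← ofAdd_zsmul]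
        norm_num
      rw [Finset.prod_congr rfl fun i _ => this i]
      exact Finset.univ_prod_mulSingle _
    have := congrFun (hcomp ▸ hψ) j
    simpa [← ofAdd_zero, Multiplicative.ofAdd.injective.eq_iff] using this
  have hdvd : ∀ j, ∃ c : ℤ, m j = (p j : ℤ) * c := by
    intro j
    exact (ZMod.intCast_zmod_eq_zero_iff_dvd (m j) (p j)).mp (hψval j)
  choose c hc using hdvd
  refine ⟨∑ j, -(q j * c j) + k, ?_⟩
  have hterm : ∀ j, Xg n p q j ^ m j = Hg n p q ^ (-(q j * c j)) := by
    intro j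
    rw [hc j, zpow_mul, zpow_natCast, hXP, ← zpow_neg, ← zpow_mul, neg_mul]
  rw [Finset.prod_congr rfl fun j _ => hterm j, prod_zpow, ← zpow_add]

lemma card_K (hp : ∀ i, 2 ≤ p i) : Nat.card (K n p q) = 2 * ∏ i, p i := by
  haveI : ∀ i, NeZero (p i) := fun i => ⟨by have := hp i; omega⟩
  set h₀ : K n p q := ⟨Hg n p q, H_mem_K n p q⟩ with hh₀
  have hord : orderOf h₀ = 2 := by
    rw [← orderOf_Hg n p q hp]
    exact (orderOf_injective (K n p q).subtype Subtype.coe_injective h₀).symm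
  set Z₀ : Subgroup (K n p q) := Subgroup.zpowers h₀ with hZ₀
  set ψK : K n p q →* (∀ i, Multiplicative (ZMod (p i))) :=
    (ψ n p q).comp (K n p q).subtype with hψK
  have hker : Z₀ ≤ ψK.ker := by
    rw [hZ₀, Subgroup.zpowers_le]
    show ψK h₀ = 1
    simp [hψK, hh₀, ψ_H]
  set Φ : (K n p q ⧸ Z₀) →* (∀ i, Multiplicative (ZMod (p i))) :=
    QuotientGroup.lift Z₀ ψK hker with hΦ
  have hΦmk : ∀ x : K n p q, Φ (QuotientGroup.mk x) = ψ n p q (x : A n p q) := fun x => rfl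
  have hbij : Function.Bijective Φ := by
    constructor
    · rw [injective_iff_map_eq_one]
      intro a
      refine QuotientGroup.induction_on a ?_
      intro x hx1
      rw [hΦmk] at hx1
      obtain ⟨t, ht⟩ := psi_ker_zpowers n p q x.2 hx1
      rw [QuotientGroup.eq_one_iff]
      refine ⟨t, ?_⟩
      ext
      rw [SubgroupClass.coe_zpow]
      exact ht.symm
    · intro f
      refine ⟨QuotientGroup.mk (∏ i, (⟨Xg n p q i, X_mem_K n p q i⟩ : K n p q) ^
        ((f i).toAdd.val)), ?_⟩
      rw [hΦmk]
      push_cast [SubgroupClass.coe_pow]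
      rw [map_prod]
      have : ∀ i, ψ n p q (Xg n p q i ^ ((f i).toAdd.val)) = Pi.mulSingle i (f i) := by
        intro i
        rw [map_pow, ψ_X, ← Pi.mulSingle_pow, ← ofAdd_nsmul, nsmul_eq_mul, mul_one,
          ZMod.natCast_rightInverse _, ofAdd_toAdd]
      rw [Finset.prod_congr rfl fun i _ => this i]
      exact Finset.univ_prod_mulSingle f
  have hcardQ : Nat.card (K n p q ⧸ Z₀) = ∏ i, p i := by
    rw [Nat.card_congr (MulEquiv.ofBijective Φ hbij).toEquiv, Nat.card_pi]
    exact Finset.prod_congr rfl fun i _ => by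
      rw [Nat.card_congr (Multiplicative.toAdd (α := ZMod (p i))), Nat.card_zmod]
  rw [Subgroup.card_eq_card_quotient_mul_card_subgroup Z₀, hcardQ, Nat.card_zpowers, hord,
    mul_comm]


end MobiusAux

/-- For the fundamental group `G` of a Seifert fibered space over a once-punctured `ℝP²`
with `n ≥ 1` singular fibers of orders `p₁,…,p_n`, the torsion subgroup of the
abelianization of `G` has order `2·p₁⋯p_n`, and the image of `h` in the abelianization
has order exactly `2`. -/
theorem mobius_abelianization_torsion (n : ℕ) (hn : 1 ≤ n)
    (p : Fin n → ℕ) (hp : ∀ i, 2 ≤ p i) (q : Fin n → ℤ)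
    (hpq : ∀ i, IsCoprime (p i : ℤ) (q i)) :
    Nat.card (CommGroup.torsion (Abelianization (PresentedGroup (mobiusRels n p q)))) =
        2 * ∏ i, p i ∧
    orderOf (Abelianization.of
        (PresentedGroup.of (Sum.inr 2) : PresentedGroup (mobiusRels n p q))) = 2 := by
  constructor
  · rw [show CommGroup.torsion (Abelianization (PresentedGroup (mobiusRels n p q)))
        = MobiusAux.K n p q from MobiusAux.torsion_eq n p q hp]
    exact MobiusAux.card_K n p q hp
  · exact MobiusAux.orderOf_Hg n p q hp
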